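/- Let L ≅ K_{1,3}, R ≅ K_{1,4} and let J = K_{L,R} be the graph on V(L) ∪ V(R) with edge set E(L) ∪ E(R) together with all edges between V(L) and V(R). Then the maximum bipartition density m_{(2)}(J) := min over partitions V(J) = V_1 ∪ V_2 of max{ m_1(J[V_1]), m_1(J[V_2]) } equals 4/5. -/

import Mathlib

open Sum

section Helpers
variable {V : Type*} {G : SimpleGraph V}

def mkSub (G : SimpleGraph V) (vs : Finset V) (es : Finset (Sym2 V))
    (hadj : ∀ u v, s(u,v) ∈ es → G.Adj u v)
    (hvert : ∀ u v, s(u,v) ∈ es → u ∈ vs) : G.Subgraph where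
  verts := ↑vs
  Adj u v := s(u,v) ∈ es
  adj_sub h := hadj _ _ h
  edge_vert h := hvert _ _ h
  symm := ⟨fun u v (h : s(u,v) ∈ es) => show s(v,u) ∈ es by rwa [Sym2.eq_swap]⟩

lemma mkSub_verts (G : SimpleGraph V) (vs es hadj hvert) :
    (mkSub G vs es hadj hvert).verts = ↑vs := rfl

lemma mkSub_edgeSet (G : SimpleGraph V) (vs es hadj hvert) :
    (mkSub G vs es hadj hvert).edgeSet = ↑es := by
  ext e
  induction e using Sym2.ind with
  | _ u v => simp [mkSub, SimpleGraph.Subgraph.mem_edgeSet]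
end Helpers

section Dense
variable {V : Type*} (J : SimpleGraph V)

lemma mk_dense (W : Set V) (vs : Finset V) (es : Finset (Sym2 V))
    (hadj : ∀ u v, s(u,v) ∈ es → J.Adj u v)
    (hvert : ∀ u v, s(u,v) ∈ es → u ∈ vs)
    (hW : ∀ x ∈ vs, x ∈ W) (hne : vs.Nonempty)
    (hineq : 4/5 ≤ (es.card : ℚ) / (vs.card : ℚ)) :
    ∃ H' : J.Subgraph, H'.verts ⊆ W ∧ H'.verts.Nonempty ∧
      4/5 ≤ (H'.edgeSet.ncard : ℚ) / (H'.verts.ncard : ℚ) := by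
  refine ⟨mkSub J vs es hadj hvert, ?_, ?_, ?_⟩
  · rw [mkSub_verts]; intro x hx; exact hW x (by simpa using hx)
  · rw [mkSub_verts]; exact ⟨hne.choose, by simpa using hne.choose_spec⟩
  · rw [mkSub_verts, mkSub_edgeSet, Set.ncard_coe_finset, Set.ncard_coe_finset]
    exact hineq

lemma triangle_dense {x y z : V} (hxy : J.Adj x y) (hyz : J.Adj y z) (hxz : J.Adj x z)
    (W : Set V) (hx : x ∈ W) (hy : y ∈ W) (hz : z ∈ W) :
    ∃ H' : J.Subgraph, H'.verts ⊆ W ∧ H'.verts.Nonempty ∧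
      4/5 ≤ (H'.edgeSet.ncard : ℚ) / (H'.verts.ncard : ℚ) := by
  classical
  have h1 := hxy.ne; have h2 := hyz.ne; have h3 := hxz.ne
  refine mk_dense J W {x, y, z} {s(x,y), s(y,z), s(x,z)} ?_ ?_ ?_ ⟨x, by simp⟩ ?_
  · intro u v h
    simp only [Finset.mem_insert, Finset.mem_singleton, Sym2.eq_iff] at h
    rcases h with (⟨rfl,rfl⟩|⟨rfl,rfl⟩)|(⟨rfl,rfl⟩|⟨rfl,rfl⟩)|(⟨rfl,rfl⟩|⟨rfl,rfl⟩)
    exacts [hxy, hxy.symm, hyz, hyz.symm, hxz, hxz.symm]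
  · intro u v h
    simp only [Finset.mem_insert, Finset.mem_singleton, Sym2.eq_iff] at h
    rcases h with (⟨rfl,rfl⟩|⟨rfl,rfl⟩)|(⟨rfl,rfl⟩|⟨rfl,rfl⟩)|(⟨rfl,rfl⟩|⟨rfl,rfl⟩) <;> simp
  · intro u hu
    simp only [Finset.mem_insert, Finset.mem_singleton] at hu
    rcases hu with rfl|rfl|rfl <;> assumption
  · have hv : ({x, y, z} : Finset V).card = 3 := by
      rw [Finset.card_insert_of_notMem (by simp [h1, h3]),
        Finset.card_insert_of_notMem (by simp [h2]), Finset.card_singleton]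
    have he : ({s(x,y), s(y,z), s(x,z)} : Finset (Sym2 V)).card = 3 := by
      rw [Finset.card_insert_of_notMem (by simp [Sym2.eq_iff, h1, h2, h3, h1.symm, h2.symm, h3.symm]),
        Finset.card_insert_of_notMem (by simp [Sym2.eq_iff, h1, h2, h3, h1.symm, h2.symm, h3.symm]),
        Finset.card_singleton]
    rw [hv, he]; norm_num
end Dense

section Dense2
variable {V : Type*} (J : SimpleGraph V)

lemma c4_dense {x y z w : V} (hxy : J.Adj x y) (hyz : J.Adj y z) (hzw : J.Adj z w)
    (hxw : J.Adj x w) (hxz : x ≠ z) (hyw : y ≠ w)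
    (W : Set V) (hx : x ∈ W) (hy : y ∈ W) (hz : z ∈ W) (hw : w ∈ W) :
    ∃ H' : J.Subgraph, H'.verts ⊆ W ∧ H'.verts.Nonempty ∧
      4/5 ≤ (H'.edgeSet.ncard : ℚ) / (H'.verts.ncard : ℚ) := by
  classical
  have h1 := hxy.ne; have h2 := hyz.ne; have h3 := hzw.ne; have h4 := hxw.ne
  refine mk_dense J W {x, y, z, w} {s(x,y), s(y,z), s(z,w), s(x,w)} ?_ ?_ ?_ ⟨x, by simp⟩ ?_
  · intro u v h
    simp only [Finset.mem_insert, Finset.mem_singleton, Sym2.eq_iff] at h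
    rcases h with (⟨rfl,rfl⟩|⟨rfl,rfl⟩)|(⟨rfl,rfl⟩|⟨rfl,rfl⟩)|(⟨rfl,rfl⟩|⟨rfl,rfl⟩)|(⟨rfl,rfl⟩|⟨rfl,rfl⟩)
    exacts [hxy, hxy.symm, hyz, hyz.symm, hzw, hzw.symm, hxw, hxw.symm]
  · intro u v h
    simp only [Finset.mem_insert, Finset.mem_singleton, Sym2.eq_iff] at h
    rcases h with (⟨rfl,rfl⟩|⟨rfl,rfl⟩)|(⟨rfl,rfl⟩|⟨rfl,rfl⟩)|(⟨rfl,rfl⟩|⟨rfl,rfl⟩)|(⟨rfl,rfl⟩|⟨rfl,rfl⟩) <;> simp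
  · intro u hu
    simp only [Finset.mem_insert, Finset.mem_singleton] at hu
    rcases hu with rfl|rfl|rfl|rfl <;> assumption
  · have hv : ({x, y, z, w} : Finset V).card = 4 := by
      rw [Finset.card_insert_of_notMem (by simp [h1, hxz, h4]),
        Finset.card_insert_of_notMem (by simp [h2, hyw]),
        Finset.card_insert_of_notMem (by simp [h3]), Finset.card_singleton]
    have he : ({s(x,y), s(y,z), s(z,w), s(x,w)} : Finset (Sym2 V)).card = 4 := by
      rw [Finset.card_insert_of_notMem (by
          simp [Sym2.eq_iff, h1, h2, h3, h4, hxz, hyw, h1.symm, h2.symm, h3.symm, h4.symm,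
            hxz.symm, hyw.symm]),
        Finset.card_insert_of_notMem (by
          simp [Sym2.eq_iff, h1, h2, h3, h4, hxz, hyw, h1.symm, h2.symm, h3.symm, h4.symm,
            hxz.symm, hyw.symm]),
        Finset.card_insert_of_notMem (by
          simp [Sym2.eq_iff, h1, h2, h3, h4, hxz, hyw, h1.symm, h2.symm, h3.symm, h4.symm,
            hxz.symm, hyw.symm]),
        Finset.card_singleton]
    rw [hv, he]; norm_num

lemma star_dense {c l1 l2 l3 l4 : V} (h1 : J.Adj c l1) (h2 : J.Adj c l2) (h3 : J.Adj c l3)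
    (h4 : J.Adj c l4) (h12 : l1 ≠ l2) (h13 : l1 ≠ l3) (h14 : l1 ≠ l4) (h23 : l2 ≠ l3)
    (h24 : l2 ≠ l4) (h34 : l3 ≠ l4)
    (W : Set V) (hc : c ∈ W) (hl1 : l1 ∈ W) (hl2 : l2 ∈ W) (hl3 : l3 ∈ W) (hl4 : l4 ∈ W) :
    ∃ H' : J.Subgraph, H'.verts ⊆ W ∧ H'.verts.Nonempty ∧
      4/5 ≤ (H'.edgeSet.ncard : ℚ) / (H'.verts.ncard : ℚ) := by
  classical
  have n1 := h1.ne; have n2 := h2.ne; have n3 := h3.ne; have n4 := h4.ne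
  refine mk_dense J W {c, l1, l2, l3, l4} {s(c,l1), s(c,l2), s(c,l3), s(c,l4)} ?_ ?_ ?_ ⟨c, by simp⟩ ?_
  · intro u v h
    simp only [Finset.mem_insert, Finset.mem_singleton, Sym2.eq_iff] at h
    rcases h with (⟨rfl,rfl⟩|⟨rfl,rfl⟩)|(⟨rfl,rfl⟩|⟨rfl,rfl⟩)|(⟨rfl,rfl⟩|⟨rfl,rfl⟩)|(⟨rfl,rfl⟩|⟨rfl,rfl⟩)
    exacts [h1, h1.symm, h2, h2.symm, h3, h3.symm, h4, h4.symm]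
  · intro u v h
    simp only [Finset.mem_insert, Finset.mem_singleton, Sym2.eq_iff] at h
    rcases h with (⟨rfl,rfl⟩|⟨rfl,rfl⟩)|(⟨rfl,rfl⟩|⟨rfl,rfl⟩)|(⟨rfl,rfl⟩|⟨rfl,rfl⟩)|(⟨rfl,rfl⟩|⟨rfl,rfl⟩) <;> simp
  · intro u hu
    simp only [Finset.mem_insert, Finset.mem_singleton] at hu
    rcases hu with rfl|rfl|rfl|rfl|rfl <;> assumption
  · have hv : ({c, l1, l2, l3, l4} : Finset V).card = 5 := by
      rw [Finset.card_insert_of_notMem (by simp [n1, n2, n3, n4]),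
        Finset.card_insert_of_notMem (by simp [h12, h13, h14]),
        Finset.card_insert_of_notMem (by simp [h23, h24]),
        Finset.card_insert_of_notMem (by simp [h34]), Finset.card_singleton]
    have he : ({s(c,l1), s(c,l2), s(c,l3), s(c,l4)} : Finset (Sym2 V)).card = 4 := by
      rw [Finset.card_insert_of_notMem (by
          simp [Sym2.eq_iff, h12, h13, h14, n1.symm, n2.symm, n3.symm, n4.symm]),
        Finset.card_insert_of_notMem (by
          simp [Sym2.eq_iff, h23, h24, n2.symm, n3.symm, n4.symm]),
        Finset.card_insert_of_notMem (by
          simp [Sym2.eq_iff, h34, n3.symm, n4.symm]),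
        Finset.card_singleton]
    rw [hv, he]; norm_num
end Dense2

section Sparse
variable {V : Type*} {G : SimpleGraph V}

lemma star_bound (H : G.Subgraph) (c : V) (hfin : H.verts.Finite)
    (hedge : ∀ u v, H.Adj u v → u = c ∨ v = c)
    (hcard : H.verts.ncard ≤ 5) (hne : H.verts.Nonempty) :
    (H.edgeSet.ncard : ℚ) / (H.verts.ncard : ℚ) ≤ 4/5 := by
  have hsub : H.edgeSet ⊆ (fun x => s(c,x)) '' (H.verts \ {c}) := by
    intro e he
    induction e using Sym2.ind with
    | _ u v =>
      have hadj : H.Adj u v := SimpleGraph.Subgraph.mem_edgeSet.mp he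
      rcases hedge u v hadj with rfl | rfl
      · exact ⟨v, ⟨H.edge_vert hadj.symm, by simpa using (H.adj_sub hadj).ne'⟩, rfl⟩
      · exact ⟨u, ⟨H.edge_vert hadj, by simpa using (H.adj_sub hadj).ne⟩, Sym2.eq_swap⟩
  have hvpos : 0 < H.verts.ncard := (Set.ncard_pos hfin).mpr hne
  have hekey : H.edgeSet.ncard ≤ H.verts.ncard - 1 ∨ H.edgeSet.ncard = 0 := by
    by_cases hc : c ∈ H.verts
    · left
      calc H.edgeSet.ncard ≤ ((fun x => s(c,x)) '' (H.verts \ {c})).ncard :=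
            Set.ncard_le_ncard hsub (hfin.diff.image _)
        _ ≤ (H.verts \ {c}).ncard := Set.ncard_image_le hfin.diff
        _ = H.verts.ncard - 1 := Set.ncard_diff_singleton_of_mem hc
    · right
      have : H.edgeSet = ∅ := by
        ext e
        simp only [Set.mem_empty_iff_false, iff_false]
        intro he
        obtain ⟨x, _, rfl⟩ := hsub he
        exact hc (H.edge_vert (SimpleGraph.Subgraph.mem_edgeSet.mp he))
      simp [this]
  rcases hekey with h | h
  · have h1 : H.edgeSet.ncard + 1 ≤ H.verts.ncard := by omega
    rw [div_le_div_iff₀ (by exact_mod_cast hvpos) (by norm_num)]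
    have c1 : (H.edgeSet.ncard : ℚ) + 1 ≤ (H.verts.ncard : ℚ) := by exact_mod_cast h1
    have c2 : (H.verts.ncard : ℚ) ≤ 5 := by exact_mod_cast hcard
    linarith
  · rw [h]
    norm_num
end Sparse

def P (S : Finset (Fin 4 ⊕ Fin 5)) : Prop :=
  (∃ a : Fin 4, ∃ b : Fin 5, a ≠ 0 ∧ inl 0 ∈ S ∧ inl a ∈ S ∧ inr b ∈ S) ∨
  (∃ b : Fin 5, ∃ a : Fin 4, b ≠ 0 ∧ inr 0 ∈ S ∧ inr b ∈ S ∧ inl a ∈ S) ∨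
  (2 ≤ (S.filter (fun x => x.isLeft)).card ∧ 2 ≤ (S.filter (fun x => x.isRight)).card) ∨
  (∃ a : Fin 4, inl a ∈ S ∧ inr 1 ∈ S ∧ inr 2 ∈ S ∧ inr 3 ∈ S ∧ inr 4 ∈ S) ∨
  (inr 0 ∈ S ∧ inr 1 ∈ S ∧ inr 2 ∈ S ∧ inr 3 ∈ S ∧ inr 4 ∈ S)

set_option synthInstance.maxSize 1000 in
instance (S : Finset (Fin 4 ⊕ Fin 5)) : Decidable (P S) := by unfold P; infer_instance

set_option maxHeartbeats 1000000 in
set_option maxRecDepth 100000 in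
lemma key : ∀ S : Finset (Fin 4 ⊕ Fin 5), P S ∨ P Sᶜ := by decide

lemma dense_of_P (J : SimpleGraph (Fin 4 ⊕ Fin 5))
    (adjLL : ∀ {a b : Fin 4}, a ≠ b → (a = 0 ∨ b = 0) → J.Adj (inl a) (inl b))
    (adjRR : ∀ {a b : Fin 5}, a ≠ b → (a = 0 ∨ b = 0) → J.Adj (inr a) (inr b))
    (adjLR : ∀ (a : Fin 4) (b : Fin 5), J.Adj (inl a) (inr b))
    (W : Set (Fin 4 ⊕ Fin 5)) (S : Finset (Fin 4 ⊕ Fin 5))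
    (hSW : ∀ x ∈ S, x ∈ W) (hP : P S) :
    ∃ H' : J.Subgraph, H'.verts ⊆ W ∧ H'.verts.Nonempty ∧
      4/5 ≤ (H'.edgeSet.ncard : ℚ) / (H'.verts.ncard : ℚ) := by
  rcases hP with ⟨a, b, ha, h0, hA, hB⟩ | ⟨b, a, hb, h0, hB, hA⟩ | ⟨hL, hR⟩ |
    ⟨a, hA, h1, h2, h3, h4⟩ | ⟨h0, h1, h2, h3, h4⟩
  · exact triangle_dense J (adjLL (Ne.symm ha) (Or.inl rfl)) (adjLR a b) (adjLR 0 b)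
      W (hSW _ h0) (hSW _ hA) (hSW _ hB)
  · exact triangle_dense J (adjRR (Ne.symm hb) (Or.inl rfl)) (adjLR a b).symm (adjLR a 0).symm
      W (hSW _ h0) (hSW _ hB) (hSW _ hA)
  · obtain ⟨u, hu, u', hu', huu⟩ := Finset.one_lt_card.mp hL
    obtain ⟨w, hw, w', hw', hww⟩ := Finset.one_lt_card.mp hR
    rw [Finset.mem_filter] at hu hu' hw hw'
    obtain ⟨a, rfl⟩ : ∃ a, u = inl a := by
      cases u with
      | inl a => exact ⟨a, rfl⟩
      | inr b => simp at hu
    obtain ⟨a', rfl⟩ : ∃ a, u' = inl a := by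
      cases u' with
      | inl a => exact ⟨a, rfl⟩
      | inr b => simp at hu'
    obtain ⟨b, rfl⟩ : ∃ b, w = inr b := by
      cases w with
      | inl a => simp at hw
      | inr b => exact ⟨b, rfl⟩
    obtain ⟨b', rfl⟩ : ∃ b, w' = inr b := by
      cases w' with
      | inl a => simp at hw'
      | inr b => exact ⟨b, rfl⟩
    exact c4_dense J (adjLR a b) (adjLR a' b).symm (adjLR a' b') (adjLR a b') huu hww
      W (hSW _ hu.1) (hSW _ hw.1) (hSW _ hu'.1) (hSW _ hw'.1)
  · exact star_dense J (adjLR a 1) (adjLR a 2) (adjLR a 3) (adjLR a 4)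
      (by decide) (by decide) (by decide) (by decide) (by decide) (by decide)
      W (hSW _ hA) (hSW _ h1) (hSW _ h2) (hSW _ h3) (hSW _ h4)
  · exact star_dense J (adjRR (by decide) (Or.inl rfl)) (adjRR (by decide) (Or.inl rfl))
      (adjRR (by decide) (Or.inl rfl)) (adjRR (by decide) (Or.inl rfl))
      (by decide) (by decide) (by decide) (by decide) (by decide) (by decide)
      W (hSW _ h0) (hSW _ h1) (hSW _ h2) (hSW _ h3) (hSW _ h4)

/-- Let `J = K_{L,R}` with `L ≅ K_{1,3}` (on `Fin 4`, centre `0`) and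
`R ≅ K_{1,4}` (on `Fin 5`, centre `0`): edges of the two stars plus all cross edges.
Then the maximum bipartition density `m_{(2)}(J) = min over partitions (V₁, V₁ᶜ) of
max{m₁(J[V₁]), m₁(J[V₁ᶜ])}` equals `4/5`: some partition has all nonempty subgraphs on
one side of density at most `4/5`, and every partition admits a nonempty subgraph on
one side of density at least `4/5`. -/
theorem stmt_14 (J : SimpleGraph (Fin 4 ⊕ Fin 5))
    (hJ : ∀ u v, J.Adj u v ↔
      ((∃ a b : Fin 4, a ≠ b ∧ (a = 0 ∨ b = 0) ∧ u = Sum.inl a ∧ v = Sum.inl b) ∨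
       (∃ a b : Fin 5, a ≠ b ∧ (a = 0 ∨ b = 0) ∧ u = Sum.inr a ∧ v = Sum.inr b) ∨
       (∃ (a : Fin 4) (b : Fin 5),
          (u = Sum.inl a ∧ v = Sum.inr b) ∨ (u = Sum.inr b ∧ v = Sum.inl a)))) :
    (∃ V₁ : Set (Fin 4 ⊕ Fin 5), ∀ H' : J.Subgraph,
        (H'.verts ⊆ V₁ ∨ H'.verts ⊆ V₁ᶜ) → H'.verts.Nonempty →
        (H'.edgeSet.ncard : ℚ) / (H'.verts.ncard : ℚ) ≤ 4 / 5) ∧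
    (∀ V₁ : Set (Fin 4 ⊕ Fin 5), ∃ H' : J.Subgraph,
        (H'.verts ⊆ V₁ ∨ H'.verts ⊆ V₁ᶜ) ∧ H'.verts.Nonempty ∧
        4 / 5 ≤ (H'.edgeSet.ncard : ℚ) / (H'.verts.ncard : ℚ)) := by
  classical
  have adjLL : ∀ {a b : Fin 4}, a ≠ b → (a = 0 ∨ b = 0) → J.Adj (inl a) (inl b) :=
    fun h h0 => (hJ _ _).mpr (Or.inl ⟨_, _, h, h0, rfl, rfl⟩)
  have adjRR : ∀ {a b : Fin 5}, a ≠ b → (a = 0 ∨ b = 0) → J.Adj (inr a) (inr b) :=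
    fun h h0 => (hJ _ _).mpr (Or.inr (Or.inl ⟨_, _, h, h0, rfl, rfl⟩))
  have adjLR : ∀ (a : Fin 4) (b : Fin 5), J.Adj (inl a) (inr b) :=
    fun a b => (hJ _ _).mpr (Or.inr (Or.inr ⟨a, b, Or.inl ⟨rfl, rfl⟩⟩))
  constructor
  · refine ⟨Set.range inl, ?_⟩
    intro H' hside hne
    rcases hside with hsub | hsub
    · refine star_bound H' (inl 0) (Set.toFinite _) ?_ ?_ hne
      · intro u v hadj
        have hu : u ∈ Set.range (inl : Fin 4 → Fin 4 ⊕ Fin 5) := hsub (H'.edge_vert hadj)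
        have hv : v ∈ Set.range (inl : Fin 4 → Fin 4 ⊕ Fin 5) := hsub (H'.edge_vert hadj.symm)
        rcases (hJ u v).mp (H'.adj_sub hadj) with
          ⟨a, b, hab, h0, rfl, rfl⟩ | ⟨a, b, hab, h0, rfl, rfl⟩ | ⟨a, b, h | h⟩
        · rcases h0 with rfl | rfl
          · exact Or.inl rfl
          · exact Or.inr rfl
        · simp at hu
        · obtain ⟨rfl, rfl⟩ := h; simp at hv
        · obtain ⟨rfl, rfl⟩ := h; simp at hu
      · calc H'.verts.ncard ≤ (Set.range (inl : Fin 4 → Fin 4 ⊕ Fin 5)).ncard :=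
              Set.ncard_le_ncard hsub (Set.toFinite _)
          _ ≤ 5 := by
              rw [← Nat.card_coe_set_eq, Nat.card_range_of_injective Sum.inl_injective]
              simp
    · refine star_bound H' (inr 0) (Set.toFinite _) ?_ ?_ hne
      · intro u v hadj
        have hu : u ∈ (Set.range (inl : Fin 4 → Fin 4 ⊕ Fin 5))ᶜ := hsub (H'.edge_vert hadj)
        have hv : v ∈ (Set.range (inl : Fin 4 → Fin 4 ⊕ Fin 5))ᶜ := hsub (H'.edge_vert hadj.symm)
        rcases (hJ u v).mp (H'.adj_sub hadj) with
          ⟨a, b, hab, h0, rfl, rfl⟩ | ⟨a, b, hab, h0, rfl, rfl⟩ | ⟨a, b, h | h⟩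
        · exact absurd (Set.mem_range_self a) hu
        · rcases h0 with rfl | rfl
          · exact Or.inl rfl
          · exact Or.inr rfl
        · obtain ⟨rfl, rfl⟩ := h; exact absurd (Set.mem_range_self a) hu
        · obtain ⟨rfl, rfl⟩ := h; exact absurd (Set.mem_range_self a) hv
      · have hsub' : H'.verts ⊆ Set.range (inr : Fin 5 → Fin 4 ⊕ Fin 5) := by
          intro x hx
          have := hsub hx
          cases x with
          | inl a => exact absurd (Set.mem_range_self a) this
          | inr b => exact Set.mem_range_self b
        calc H'.verts.ncard ≤ (Set.range (inr : Fin 5 → Fin 4 ⊕ Fin 5)).ncard :=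
              Set.ncard_le_ncard hsub' (Set.toFinite _)
          _ ≤ 5 := by
              rw [← Nat.card_coe_set_eq, Nat.card_range_of_injective Sum.inr_injective]
              simp
  · intro V₁
    obtain hP | hP := key (Set.toFinite V₁).toFinset
    · obtain ⟨H', h1, h2, h3⟩ := dense_of_P J adjLL adjRR adjLR V₁ _
        (fun x hx => (Set.Finite.mem_toFinset _).mp hx) hP
      exact ⟨H', Or.inl h1, h2, h3⟩
    · obtain ⟨H', h1, h2, h3⟩ := dense_of_P J adjLL adjRR adjLR V₁ᶜ _
        (fun x hx => by
          simp only [Finset.mem_compl, Set.Finite.mem_toFinset] at hx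
          exact hx) hP
      exact ⟨H', Or.inr h1, h2, h3⟩
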